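/- Let A ∈ ℝ^{d×d}, B ∈ ℝ^{d×n}, C ∈ ℝ^{n×d}, and let X, L, W be real matrices with X symmetric positive semidefinite, -AᵀX - XA = LᵀL, and C - BᵀX = WᵀL. If (C, A) is observable (i.e., the only z ∈ ℝ^d with C A^k z = 0 for all k ∈ ℕ is z = 0), then X is positive definite. -/

import Mathlib

open Matrix

theorem stmt_10 (d n : ℕ) (A : Matrix (Fin d) (Fin d) ℝ) (B : Matrix (Fin d) (Fin n) ℝ)
    (C : Matrix (Fin n) (Fin d) ℝ)
    (X : Matrix (Fin d) (Fin d) ℝ) (L : Matrix (Fin n) (Fin d) ℝ)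
    (W : Matrix (Fin n) (Fin n) ℝ)
    (hX : X.PosSemidef) (h1 : -Aᵀ * X - X * A = Lᵀ * L)
    (h2 : C - Bᵀ * X = Wᵀ * L)
    (hobs : ∀ z : Fin d → ℝ, (∀ k : ℕ, C.mulVec ((A ^ k).mulVec z) = 0) → z = 0) :
    X.PosDef := by
  -- key step: if X w = 0 then L w = 0 and X (A w) = 0
  have key : ∀ w : Fin d → ℝ, X.mulVec w = 0 →
      L.mulVec w = 0 ∧ X.mulVec (A.mulVec w) = 0 := by
    intro w hw
    have hXsym : Xᵀ = X := hX.1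
    have hXw : ∀ v : Fin d → ℝ, w ⬝ᵥ X.mulVec v = (X.mulVec w) ⬝ᵥ v := by
      intro v
      rw [dotProduct_mulVec, show w ᵥ* X = X *ᵥ w from by rw [← hXsym, vecMul_transpose, hXsym]]
    have hvec : (Lᵀ * L).mulVec w = -(X.mulVec (A.mulVec w)) := by
      rw [← h1]
      rw [sub_mulVec, Matrix.neg_mul, neg_mulVec, ← Matrix.mulVec_mulVec, ← Matrix.mulVec_mulVec, hw]
      simp
    have hLw : L.mulVec w = 0 := by
      have hdot : (L.mulVec w) ⬝ᵥ (L.mulVec w) = 0 := by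
        have : w ⬝ᵥ (Lᵀ * L).mulVec w = (L.mulVec w) ⬝ᵥ (L.mulVec w) := by
          rw [← Matrix.mulVec_mulVec, dotProduct_mulVec, vecMul_transpose]
        rw [← this, hvec, dotProduct_neg, hXw, hw]
        simp
      simpa [dotProduct_self_eq_zero] using hdot
    refine ⟨hLw, ?_⟩
    have : (Lᵀ * L).mulVec w = 0 := by
      rw [← Matrix.mulVec_mulVec, hLw, mulVec_zero]
    rw [this] at hvec
    simpa using hvec.symm
  have kerX : ∀ z : Fin d → ℝ, X.mulVec z = 0 → z = 0 := by
    intro z hz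
    have hC : C = Wᵀ * L + Bᵀ * X := sub_eq_iff_eq_add.mp h2
    apply hobs
    have main : ∀ k : ℕ, X.mulVec ((A ^ k).mulVec z) = 0 ∧
        L.mulVec ((A ^ k).mulVec z) = 0 := by
      intro k
      induction k with
      | zero => exact ⟨by simpa using hz, by simpa using (key z hz).1⟩
      | succ m ih =>
        have hmul : (A ^ (m+1)).mulVec z = A.mulVec ((A ^ m).mulVec z) := by
          rw [pow_succ', Matrix.mulVec_mulVec]
        have h1 := (key _ ih.1).2
        rw [hmul]
        exact ⟨h1, (key _ h1).1⟩
    intro k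
    have ⟨hXk, hLk⟩ := main k
    rw [hC, add_mulVec, ← Matrix.mulVec_mulVec, ← Matrix.mulVec_mulVec, hXk, hLk]
    simp
  refine ⟨hX.1, fun x hx => ?_⟩
  rcases lt_or_eq_of_le (hX.2 x) with h | h
  · exact h
  · exfalso
    apply hx
    rw [← Finsupp.coe_eq_zero]
    apply kerX
    exact (hX.dotProduct_mulVec_zero_iff x).mp (by simpa [dotProduct, mulVec, Finsupp.sum_fintype, Finset.mul_sum, mul_assoc] using h.symm)
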